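/- In the US legislative game, for every k with c_p(k) ≠ 0, c_p(k) > c_s(k). -/

import Mathlib

/-- The players of the US legislative game: the president, the vice president,
100 senators, and 435 representatives. -/
inductive USPlayer where
  | pres : USPlayer
  | vp : USPlayer
  | sen : Fin 100 → USPlayer
  | rep : Fin 435 → USPlayer
  deriving DecidableEq

/-- Whether a player is a senator. -/
def USPlayer.isSen : USPlayer → Bool
  | .sen _ => true
  | _ => false

/-- Whether a player is a representative. -/
def USPlayer.isRep : USPlayer → Bool
  | .rep _ => true
  | _ => false

/-- The number of senators in a coalition. -/
def numSen (S : Finset USPlayer) : ℕ := (S.filter (fun p => p.isSen)).card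

/-- The number of representatives in a coalition. -/
def numRep (S : Finset USPlayer) : ℕ := (S.filter (fun p => p.isRep)).card

/-- A coalition is winning in the US legislative game iff either the president is in it
together with at least 218 representatives and either at least 51 senators or the vice
president and at least 50 senators; or it contains at least 67 senators and at least
290 representatives (veto override). -/
def usWinning (S : Finset USPlayer) : Prop :=
  (USPlayer.pres ∈ S ∧ 218 ≤ numRep S ∧
    (51 ≤ numSen S ∨ (USPlayer.vp ∈ S ∧ 50 ≤ numSen S))) ∨
  (67 ≤ numSen S ∧ 290 ≤ numRep S)

/-- The number of coalitions of size `k` in which player `i` is critical in the US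
legislative game. -/
noncomputable def usCrit (i : USPlayer) (k : ℕ) : ℕ :=
  Set.ncard {S : Finset USPlayer |
    S.card = k ∧ i ∈ S ∧ usWinning S ∧ ¬ usWinning (S.erase i)}
deriving instance Fintype for USPlayer

namespace USLeg
open USPlayer Finset

lemma numSen_erase_not (S : Finset USPlayer) {p : USPlayer} (hp : p.isSen = false) :
    numSen (S.erase p) = numSen S := by
  unfold numSen
  rw [Finset.filter_erase, Finset.erase_eq_of_notMem]
  simp [hp]

lemma numRep_erase_not (S : Finset USPlayer) {p : USPlayer} (hp : p.isRep = false) :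
    numRep (S.erase p) = numRep S := by
  unfold numRep
  rw [Finset.filter_erase, Finset.erase_eq_of_notMem]
  simp [hp]

lemma numSen_erase_sen (S : Finset USPlayer) (t : Fin 100) (h : USPlayer.sen t ∈ S) :
    numSen (S.erase (.sen t)) = numSen S - 1 := by
  unfold numSen
  rw [Finset.filter_erase, Finset.card_erase_of_mem]
  simp [h, USPlayer.isSen]
  exact Finset.mem_filter.2 ⟨h, rfl⟩

lemma numSen_insert_not (S : Finset USPlayer) {p : USPlayer} (hp : p.isSen = false) :
    numSen (insert p S) = numSen S := by
  unfold numSen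
  rw [Finset.filter_insert]
  simp [hp]

lemma numRep_insert_not (S : Finset USPlayer) {p : USPlayer} (hp : p.isRep = false) :
    numRep (insert p S) = numRep S := by
  unfold numRep
  rw [Finset.filter_insert]
  simp [hp]

lemma numSen_insert_sen (S : Finset USPlayer) (t : Fin 100) (h : USPlayer.sen t ∉ S) :
    numSen (insert (.sen t) S) = numSen S + 1 := by
  unfold numSen
  rw [Finset.filter_insert]
  rw [if_pos (by rfl), Finset.card_insert_of_notMem (fun hm => h (Finset.mem_filter.1 hm).1)]

lemma exists_sen_not_mem (S : Finset USPlayer) (h : numSen S < 100) :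
    ∃ t : Fin 100, USPlayer.sen t ∉ S := by
  by_contra hc
  push_neg at hc
  have hsub : (Finset.univ.image USPlayer.sen) ⊆ S.filter (fun p => p.isSen) := by
    intro p hp
    simp only [Finset.mem_image] at hp
    obtain ⟨t, -, rfl⟩ := hp
    exact Finset.mem_filter.2 ⟨hc t, rfl⟩
  have hinj : Function.Injective USPlayer.sen := fun a b hab => by injection hab
  have := Finset.card_le_card hsub
  rw [Finset.card_image_of_injective _ hinj, Finset.card_univ, Fintype.card_fin] at this
  unfold numSen at h
  omega

lemma exists_sen_mem (S : Finset USPlayer) (h : 0 < numSen S) :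
    ∃ t : Fin 100, USPlayer.sen t ∈ S := by
  obtain ⟨p, hp⟩ := Finset.card_pos.1 h
  rw [Finset.mem_filter] at hp
  obtain ⟨hpS, hps⟩ := hp
  cases p with
  | sen t => exact ⟨t, hpS⟩
  | pres => simp [USPlayer.isSen] at hps
  | vp => simp [USPlayer.isSen] at hps
  | rep r => simp [USPlayer.isSen] at hps

lemma winning_erase_pres (S : Finset USPlayer) :
    usWinning (S.erase .pres) ↔ (67 ≤ numSen S ∧ 290 ≤ numRep S) := by
  unfold usWinning
  rw [numSen_erase_not S (p := .pres) rfl, numRep_erase_not S (p := .pres) rfl]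
  simp [Finset.notMem_erase]

lemma critP_iff (k : ℕ) (S : Finset USPlayer) :
    (S.card = k ∧ USPlayer.pres ∈ S ∧ usWinning S ∧ ¬ usWinning (S.erase .pres)) ↔
    (S.card = k ∧ USPlayer.pres ∈ S ∧ 218 ≤ numRep S ∧
      (51 ≤ numSen S ∨ (USPlayer.vp ∈ S ∧ 50 ≤ numSen S)) ∧
      ¬ (67 ≤ numSen S ∧ 290 ≤ numRep S)) := by
  constructor
  · rintro ⟨hc, hP, hw, hl⟩
    rw [winning_erase_pres] at hl
    refine ⟨hc, hP, ?_, ?_, hl⟩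
    · rcases hw with ⟨-, h, -⟩ | h
      · exact h
      · exact absurd h hl
    · rcases hw with ⟨-, -, h⟩ | h
      · exact h
      · exact absurd h hl
  · rintro ⟨hc, hP, hr, hs, hl⟩
    exact ⟨hc, hP, Or.inl ⟨hP, hr, hs⟩, (winning_erase_pres S).not.2 hl⟩

end USLeg

/-- Proposition 3 (c) of the paper: wherever the president's critical number is nonzero
it strictly exceeds that of any senator. -/
theorem us_president_dominates_senator :
    ∀ k : ℕ, usCrit USPlayer.pres k ≠ 0 →
      ∀ s : Fin 100, usCrit USPlayer.pres k > usCrit (USPlayer.sen s) k := by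
  classical
  intro k hk s
  unfold usCrit at hk ⊢
  set A : Set (Finset USPlayer) := {S | S.card = k ∧ USPlayer.sen s ∈ S ∧ usWinning S ∧
    ¬ usWinning (S.erase (USPlayer.sen s))} with hA
  set B : Set (Finset USPlayer) := {S | S.card = k ∧ USPlayer.pres ∈ S ∧ usWinning S ∧
    ¬ usWinning (S.erase USPlayer.pres)} with hB
  have hps : ∀ t : Fin 100, USPlayer.pres ≠ USPlayer.sen t := fun _ => nofun
  have hvs : ∀ t : Fin 100, USPlayer.vp ≠ USPlayer.sen t := fun t => nofun
  set f : Finset USPlayer → Finset USPlayer := fun S =>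
    if USPlayer.pres ∈ S then S else insert USPlayer.pres (S.erase (USPlayer.sen s)) with hf
  -- key facts about A elements not containing the president
  have hC : ∀ S, S ∈ A → USPlayer.pres ∉ S → numSen S = 67 ∧ 290 ≤ numRep S := by
    rintro S ⟨hcard, hsS, hw, hl⟩ hP
    rcases hw with ⟨hP', -⟩ | ⟨hm, hr⟩
    · exact absurd hP' hP
    have hEs : numSen (S.erase (USPlayer.sen s)) = numSen S - 1 := USLeg.numSen_erase_sen S s hsS
    have hEr : numRep (S.erase (USPlayer.sen s)) = numRep S := USLeg.numRep_erase_not S (p := .sen s) rfl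
    refine ⟨?_, hr⟩
    by_contra hne
    exact hl (Or.inr ⟨by omega, by omega⟩)
  have hfC : ∀ S, S ∈ A → USPlayer.pres ∉ S → numSen (f S) = 66 := by
    intro S hSA hP
    obtain ⟨hm, -⟩ := hC S hSA hP
    have hEs : numSen (S.erase (USPlayer.sen s)) = numSen S - 1 :=
      USLeg.numSen_erase_sen S s hSA.2.1
    rw [hf]
    simp only [if_neg hP]
    rw [USLeg.numSen_insert_not _ (p := .pres) rfl, hEs, hm]
  have hmaps : ∀ S ∈ A, f S ∈ B := by
    rintro S ⟨hcard, hsS, hw, hl⟩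
    by_cases hP : USPlayer.pres ∈ S
    · rw [hf]
      simp only [if_pos hP]
      rw [hB, Set.mem_setOf_eq, USLeg.critP_iff]
      have hEs : numSen (S.erase (USPlayer.sen s)) = numSen S - 1 := USLeg.numSen_erase_sen S s hsS
      have hEr : numRep (S.erase (USPlayer.sen s)) = numRep S := USLeg.numRep_erase_not S (p := .sen s) rfl
      have hPe : USPlayer.pres ∈ S.erase (USPlayer.sen s) := Finset.mem_erase.2 ⟨hps s, hP⟩
      have hno : ¬ (67 ≤ numSen S ∧ 290 ≤ numRep S) := by
        rintro ⟨hm, hr⟩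
        exact hl (Or.inl ⟨hPe, by omega, Or.inl (by omega)⟩)
      rcases hw with ⟨-, hr, hcl⟩ | hov
      · exact ⟨hcard, hP, hr, hcl, hno⟩
      · exact absurd hov hno
    · obtain ⟨hm67, hr⟩ := hC S ⟨hcard, hsS, hw, hl⟩ hP
      rw [hf]
      simp only [if_neg hP]
      have hPe : USPlayer.pres ∉ S.erase (USPlayer.sen s) := fun h => hP (Finset.mem_erase.1 h).2
      rw [hB, Set.mem_setOf_eq, USLeg.critP_iff]
      have hEs : numSen (S.erase (USPlayer.sen s)) = numSen S - 1 := USLeg.numSen_erase_sen S s hsS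
      have hEr : numRep (S.erase (USPlayer.sen s)) = numRep S := USLeg.numRep_erase_not S (p := .sen s) rfl
      have h1 : numSen (insert USPlayer.pres (S.erase (USPlayer.sen s))) = numSen S - 1 := by
        rw [USLeg.numSen_insert_not _ (p := .pres) rfl, hEs]
      have h2 : numRep (insert USPlayer.pres (S.erase (USPlayer.sen s))) = numRep S := by
        rw [USLeg.numRep_insert_not _ (p := .pres) rfl, hEr]
      refine ⟨?_, Finset.mem_insert_self _ _, by omega, Or.inl (by omega), by omega⟩
      rw [Finset.card_insert_of_notMem hPe, Finset.card_erase_of_mem hsS]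
      have : 0 < S.card := Finset.card_pos.2 ⟨_, hsS⟩
      omega
  have hinj : Set.InjOn f A := by
    rintro S1 h1 S2 h2 hfe
    have hs1 : USPlayer.sen s ∈ S1 := h1.2.1
    have hs2 : USPlayer.sen s ∈ S2 := h2.2.1
    by_cases hP1 : USPlayer.pres ∈ S1 <;> by_cases hP2 : USPlayer.pres ∈ S2
    · simpa [hf, hP1, hP2] using hfe
    · exfalso
      simp only [hf, if_pos hP1, if_neg hP2] at hfe
      have hmem : USPlayer.sen s ∈ insert USPlayer.pres (S2.erase (USPlayer.sen s)) :=
        hfe ▸ hs1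
      rcases Finset.mem_insert.1 hmem with h | h
      · exact hps s h.symm
      · exact (Finset.mem_erase.1 h).1 rfl
    · exfalso
      simp only [hf, if_neg hP1, if_pos hP2] at hfe
      have hmem : USPlayer.sen s ∈ insert USPlayer.pres (S1.erase (USPlayer.sen s)) :=
        hfe ▸ hs2
      rcases Finset.mem_insert.1 hmem with h | h
      · exact hps s h.symm
      · exact (Finset.mem_erase.1 h).1 rfl
    · simp only [hf, if_neg hP1, if_neg hP2] at hfe
      have hP1e : USPlayer.pres ∉ S1.erase (USPlayer.sen s) := fun h => hP1 (Finset.mem_erase.1 h).2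
      have hP2e : USPlayer.pres ∉ S2.erase (USPlayer.sen s) := fun h => hP2 (Finset.mem_erase.1 h).2
      have hE : S1.erase (USPlayer.sen s) = S2.erase (USPlayer.sen s) := by
        have := congrArg (fun T => T.erase USPlayer.pres) hfe
        simpa [Finset.erase_insert hP1e, Finset.erase_insert hP2e] using this
      calc S1 = insert (USPlayer.sen s) (S1.erase (USPlayer.sen s)) := (Finset.insert_erase hs1).symm
        _ = insert (USPlayer.sen s) (S2.erase (USPlayer.sen s)) := by rw [hE]
        _ = S2 := Finset.insert_erase hs2
  -- witness in B outside the image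
  obtain ⟨T, hT⟩ := Set.nonempty_of_ncard_ne_zero hk
  have hTB := hT
  rw [hB, Set.mem_setOf_eq, USLeg.critP_iff] at hTB
  obtain ⟨hTc, hTP, hTr, hTcl, hTno⟩ := hTB
  have hTm50 : 50 ≤ numSen T := by rcases hTcl with h | ⟨-, h⟩ <;> omega
  have hwit : ∃ W ∈ B, W ∉ f '' A := by
    by_cases hm : numSen T ≤ 51
    · -- produce W with sen s ∉ W and numSen W ≤ 51
      have hkey : ∀ W, W ∈ B → USPlayer.sen s ∉ W → numSen W ≤ 51 → W ∉ f '' A := by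
        rintro W hWB hsW hWm ⟨S, hSA, hfS⟩
        by_cases hP : USPlayer.pres ∈ S
        · rw [hf] at hfS
          simp only [if_pos hP] at hfS
          exact hsW (hfS ▸ hSA.2.1)
        · have := hfC S hSA hP
          rw [hfS] at this
          omega
      by_cases hsT : USPlayer.sen s ∈ T
      · obtain ⟨t, htT⟩ := USLeg.exists_sen_not_mem T (by omega)
        set W := insert (USPlayer.sen t) (T.erase (USPlayer.sen s)) with hW
        have hste : USPlayer.sen t ∉ T.erase (USPlayer.sen s) := fun h => htT (Finset.mem_erase.1 h).2
        have hWm : numSen W = numSen T := by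
          rw [hW, USLeg.numSen_insert_sen _ t hste, USLeg.numSen_erase_sen T s hsT]
          omega
        have hWr : numRep W = numRep T := by
          rw [hW, USLeg.numRep_insert_not _ (p := .sen t) rfl, USLeg.numRep_erase_not T (p := .sen s) rfl]
        have hWc : W.card = k := by
          rw [hW, Finset.card_insert_of_notMem hste, Finset.card_erase_of_mem hsT]
          have : 0 < T.card := Finset.card_pos.2 ⟨_, hsT⟩
          omega
        have hWP : USPlayer.pres ∈ W :=
          Finset.mem_insert_of_mem (Finset.mem_erase.2 ⟨hps _, hTP⟩)
        have hWvp : USPlayer.vp ∈ T → USPlayer.vp ∈ W := fun h =>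
          Finset.mem_insert_of_mem (Finset.mem_erase.2 ⟨hvs s, h⟩)
        have hWB : W ∈ B := by
          rw [hB, Set.mem_setOf_eq, USLeg.critP_iff]
          refine ⟨hWc, hWP, by omega, ?_, by omega⟩
          rcases hTcl with h | ⟨hv, h⟩
          · exact Or.inl (by omega)
          · exact Or.inr ⟨hWvp hv, by omega⟩
        have hsW : USPlayer.sen s ∉ W := by
          rw [hW]
          intro h
          rcases Finset.mem_insert.1 h with h | h
          · exact htT (h ▸ hsT)
          · exact (Finset.mem_erase.1 h).1 rfl
        exact ⟨W, hWB, hkey W hWB hsW (by omega)⟩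
      · exact ⟨T, hT, hkey T hT hsT (by omega)⟩
    · -- numSen T ≥ 52 : produce W with sen s ∈ W and numSen W ≥ 52
      have hkey : ∀ W, W ∈ B → USPlayer.sen s ∈ W → 52 ≤ numSen W → W ∉ f '' A := by
        rintro W hWB hsW hWm ⟨S, hSA, hfS⟩
        by_cases hP : USPlayer.pres ∈ S
        · rw [hf] at hfS
          simp only [if_pos hP] at hfS
          -- W = S ∈ A, so erase (sen s) loses; but it wins
          obtain ⟨-, -, -, hl⟩ := hSA
          rw [hfS] at hl
          rw [hB, Set.mem_setOf_eq, USLeg.critP_iff] at hWB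
          obtain ⟨-, hWP, hWr, -, -⟩ := hWB
          refine hl (Or.inl ⟨Finset.mem_erase.2 ⟨hps s, hWP⟩, ?_, Or.inl ?_⟩)
          · rw [USLeg.numRep_erase_not W (p := .sen s) rfl]; omega
          · rw [USLeg.numSen_erase_sen W s hsW]; omega
        · rw [hf] at hfS
          simp only [if_neg hP] at hfS
          have : USPlayer.sen s ∈ insert USPlayer.pres (S.erase (USPlayer.sen s)) := hfS ▸ hsW
          rcases Finset.mem_insert.1 this with h | h
          · exact hps s h.symm
          · exact (Finset.mem_erase.1 h).1 rfl
      by_cases hsT : USPlayer.sen s ∈ T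
      · exact ⟨T, hT, hkey T hT hsT (by omega)⟩
      · obtain ⟨t, htT⟩ := USLeg.exists_sen_mem T (by omega)
        set W := insert (USPlayer.sen s) (T.erase (USPlayer.sen t)) with hW
        have hste : USPlayer.sen s ∉ T.erase (USPlayer.sen t) := fun h => hsT (Finset.mem_erase.1 h).2
        have hWm : numSen W = numSen T := by
          rw [hW, USLeg.numSen_insert_sen _ s hste, USLeg.numSen_erase_sen T t htT]
          omega
        have hWr : numRep W = numRep T := by
          rw [hW, USLeg.numRep_insert_not _ (p := .sen s) rfl, USLeg.numRep_erase_not T (p := .sen t) rfl]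
        have hWc : W.card = k := by
          rw [hW, Finset.card_insert_of_notMem hste, Finset.card_erase_of_mem htT]
          have : 0 < T.card := Finset.card_pos.2 ⟨_, htT⟩
          omega
        have hWP : USPlayer.pres ∈ W :=
          Finset.mem_insert_of_mem (Finset.mem_erase.2 ⟨hps _, hTP⟩)
        have hWvp : USPlayer.vp ∈ T → USPlayer.vp ∈ W := fun h =>
          Finset.mem_insert_of_mem (Finset.mem_erase.2 ⟨hvs t, h⟩)
        have hWB : W ∈ B := by
          rw [hB, Set.mem_setOf_eq, USLeg.critP_iff]
          refine ⟨hWc, hWP, by omega, ?_, by omega⟩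
          rcases hTcl with h | ⟨hv, h⟩
          · exact Or.inl (by omega)
          · exact Or.inr ⟨hWvp hv, by omega⟩
        have hsW : USPlayer.sen s ∈ W := Finset.mem_insert_self _ _
        exact ⟨W, hWB, hkey W hWB hsW (by omega)⟩
  obtain ⟨W, hWB, hWni⟩ := hwit
  have hsub : f '' A ⊆ B := Set.image_subset_iff.2 hmaps
  have hss : f '' A ⊂ B := (Set.ssubset_iff_of_subset hsub).2 ⟨W, hWB, hWni⟩
  calc A.ncard = (f '' A).ncard := (Set.ncard_image_of_injOn hinj).symm
    _ < B.ncard := Set.ncard_lt_ncard hss (Set.toFinite B)
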